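/- Let X ≠ 0 be a real m×n matrix with rank(X) ≤ k. Then the matrix X / ‖X‖_{k,2} is a subgradient of the dual Ky Fan 2-k-norm at X, i.e., for all Y, ‖X + Y‖_{k,2}^⋆ − ‖X‖_{k,2}^⋆ ≥ ⟨X/‖X‖_{k,2}, Y⟩. -/

import Mathlib

open Matrix

/-- Singular values of a real `m × n` matrix, sorted in decreasing order
(indexed by `Fin n`; `σ i = sqrt` of the `i`-th largest eigenvalue of `Aᵀ * A`). -/
noncomputable def svalsDesc {m n : ℕ} (A : Matrix (Fin m) (Fin n) ℝ) : Fin n → ℝ :=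
  fun i =>
    Real.sqrt
      (((show (Aᵀ * A).IsHermitian from by
        simpa using Matrix.isHermitian_conjTranspose_mul_self A).eigenvalues ∘
        Tuple.sort (show (Aᵀ * A).IsHermitian from by
        simpa using Matrix.isHermitian_conjTranspose_mul_self A).eigenvalues) i.rev)

/-- Ky Fan 2-k-norm: `(∑_{i=1}^k σ_i(A)²)^{1/2}`. -/
noncomputable def kyFan2 {m n : ℕ} (k : ℕ) (A : Matrix (Fin m) (Fin n) ℝ) : ℝ :=
  Real.sqrt (∑ i ∈ Finset.univ.filter (fun i : Fin n => (i : ℕ) < k), (svalsDesc A i) ^ 2)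

/-- Frobenius inner product `⟨A, B⟩ = trace (Aᵀ B)`. -/
noncomputable def frobInner {m n : ℕ} (A B : Matrix (Fin m) (Fin n) ℝ) : ℝ :=
  ∑ i, ∑ j, A i j * B i j

/-- Frobenius norm. -/
noncomputable def frobNorm {m n : ℕ} (A : Matrix (Fin m) (Fin n) ℝ) : ℝ :=
  Real.sqrt (∑ i, ∑ j, (A i j) ^ 2)

/-- Dual Ky Fan 2-k-norm `‖A‖_{k,2}^⋆ = max {⟨A,X⟩ : ‖X‖_{k,2} ≤ 1}`. -/
noncomputable def kyFan2Dual {m n : ℕ} (k : ℕ) (A : Matrix (Fin m) (Fin n) ℝ) : ℝ :=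
  sSup {c : ℝ | ∃ X : Matrix (Fin m) (Fin n) ℝ, kyFan2 k X ≤ 1 ∧ c = frobInner A X}

/-- The linear map `𝒜` satisfies the restricted isometry inequality with constant `δ`
for all matrices of rank at most `r`. -/
def HasRIP {m n p : ℕ} (𝒜 : Matrix (Fin m) (Fin n) ℝ →ₗ[ℝ] EuclideanSpace ℝ (Fin p))
    (r : ℕ) (δ : ℝ) : Prop :=
  ∀ X : Matrix (Fin m) (Fin n) ℝ, X.rank ≤ r →
    (1 - δ) * frobNorm X ≤ ‖𝒜 X‖ ∧ ‖𝒜 X‖ ≤ (1 + δ) * frobNorm X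

section kyfanHelpers

variable {m n k : ℕ}

lemma Matrix.isHermitian_transpose_mul_self (A : Matrix (Fin m) (Fin n) ℝ) :
    (Aᵀ * A).IsHermitian := by
  simpa using Matrix.isHermitian_conjTranspose_mul_self A

/-- Sorted-descending eigenvalues of `AᵀA`. -/
noncomputable def evD (A : Matrix (Fin m) (Fin n) ℝ) : Fin n → ℝ :=
  fun i => ((Matrix.isHermitian_transpose_mul_self A).eigenvalues ∘
      Tuple.sort (Matrix.isHermitian_transpose_mul_self A).eigenvalues) i.rev

lemma evD_eq_comp (A : Matrix (Fin m) (Fin n) ℝ) :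
    evD A = ((Matrix.isHermitian_transpose_mul_self A).eigenvalues ∘
      ((Fin.revPerm.trans (Tuple.sort (Matrix.isHermitian_transpose_mul_self A).eigenvalues)) :
        Equiv.Perm (Fin n))) := rfl

lemma posSemidef_XtX (A : Matrix (Fin m) (Fin n) ℝ) : (Aᴴ * A).PosSemidef :=
  Matrix.posSemidef_conjTranspose_mul_self A

lemma ev_nonneg (A : Matrix (Fin m) (Fin n) ℝ) (j : Fin n) :
    0 ≤ (Matrix.isHermitian_transpose_mul_self A).eigenvalues j :=
  (posSemidef_XtX A).eigenvalues_nonneg j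

lemma evD_nonneg (A : Matrix (Fin m) (Fin n) ℝ) (i : Fin n) : 0 ≤ evD A i :=
  ev_nonneg A _

lemma evD_antitone (A : Matrix (Fin m) (Fin n) ℝ) : Antitone (evD A) := by
  intro i j hij
  exact Tuple.monotone_sort _ (Fin.rev_le_rev.mpr hij)

lemma sq_svalsDesc (A : Matrix (Fin m) (Fin n) ℝ) (i : Fin n) :
    svalsDesc A i ^ 2 = evD A i :=
  Real.sq_sqrt (evD_nonneg A i)

lemma sum_eigenvalues_eq_trace' {N : ℕ} (M : Matrix (Fin N) (Fin N) ℝ) (hM : M.IsHermitian) :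
    ∑ i, hM.eigenvalues i = M.trace := by
  rw [hM.trace_eq_sum_eigenvalues]
  simp

lemma sum_evD (A : Matrix (Fin m) (Fin n) ℝ) :
    ∑ i, evD A i = ∑ i, ∑ j, (A i j) ^ 2 := by
  rw [evD_eq_comp]
  simp only [Function.comp_apply]
  rw [Equiv.sum_comp (Fin.revPerm.trans (Tuple.sort (Matrix.isHermitian_transpose_mul_self A).eigenvalues)) (Matrix.isHermitian_transpose_mul_self A).eigenvalues,
    sum_eigenvalues_eq_trace' _ (Matrix.isHermitian_transpose_mul_self A)]
  rw [Matrix.trace]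
  rw [Finset.sum_comm (γ := Fin m)]
  apply Finset.sum_congr rfl
  intro j _
  simp only [Matrix.diag, Matrix.mul_apply, Matrix.conjTranspose_apply, Matrix.transpose_apply, star_trivial, sq]

lemma frobNorm_nonneg (A : Matrix (Fin m) (Fin n) ℝ) : 0 ≤ frobNorm A := Real.sqrt_nonneg _

lemma kyFan2_nonneg (A : Matrix (Fin m) (Fin n) ℝ) : 0 ≤ kyFan2 k A := Real.sqrt_nonneg _

lemma frobNorm_sq (A : Matrix (Fin m) (Fin n) ℝ) :
    frobNorm A ^ 2 = ∑ i, ∑ j, (A i j) ^ 2 :=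
  Real.sq_sqrt (Finset.sum_nonneg fun _ _ => Finset.sum_nonneg fun _ _ => sq_nonneg _)

lemma kyFan2_sq (A : Matrix (Fin m) (Fin n) ℝ) :
    kyFan2 k A ^ 2 = ∑ i ∈ Finset.univ.filter (fun i : Fin n => (i : ℕ) < k), evD A i := by
  rw [kyFan2, Real.sq_sqrt (Finset.sum_nonneg fun i _ => sq_nonneg _)]
  exact Finset.sum_congr rfl fun i _ => sq_svalsDesc A i

lemma kyFan2_le_frobNorm (A : Matrix (Fin m) (Fin n) ℝ) : kyFan2 k A ≤ frobNorm A := by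
  rw [kyFan2, frobNorm]
  apply Real.sqrt_le_sqrt
  calc ∑ i ∈ Finset.univ.filter (fun i : Fin n => (i : ℕ) < k), (svalsDesc A i) ^ 2
      = ∑ i ∈ Finset.univ.filter (fun i : Fin n => (i : ℕ) < k), evD A i :=
        Finset.sum_congr rfl fun i _ => sq_svalsDesc A i
    _ ≤ ∑ i, evD A i :=
        Finset.sum_le_sum_of_subset_of_nonneg (Finset.filter_subset _ _)
          (fun i _ _ => evD_nonneg A i)
    _ = ∑ i, ∑ j, (A i j) ^ 2 := sum_evD A

lemma card_filter_lt_fin (hkn : k ≤ n) :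
    (Finset.univ.filter fun j : Fin n => (j : ℕ) < k).card = k := by
  have he : (Finset.univ.filter fun j : Fin n => (j : ℕ) < k) =
      (Finset.range k).attachFin (fun m hm => lt_of_lt_of_le (Finset.mem_range.mp hm) hkn) := by
    ext a
    simp [Finset.mem_attachFin]
  rw [he, Finset.card_attachFin, Finset.card_range]

/-- the Ky Fan majorization step -/
lemma kyfan_principle {n k : ℕ} (hk1 : 1 ≤ k) (hkn : k ≤ n)
    (lam lamD : Fin n → ℝ) (hnn : ∀ i, 0 ≤ lam i)
    (σ : Equiv.Perm (Fin n)) (hσ : lamD = lam ∘ σ) (hanti : Antitone lamD)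
    (c : Fin n → ℝ) (hc0 : ∀ j, 0 ≤ c j) (hc1 : ∀ j, c j ≤ 1) (hsum : ∑ j, c j ≤ (k : ℝ)) :
    ∑ j, lam j * c j ≤ ∑ j ∈ Finset.univ.filter (fun j : Fin n => (j : ℕ) < k), lamD j := by
  have hkm1 : k - 1 < n := by omega
  set t : ℝ := lamD ⟨k - 1, hkm1⟩ with ht
  have ht0 : 0 ≤ t := by rw [ht, hσ]; exact hnn _
  have hDnn : ∀ j, 0 ≤ lamD j := by intro j; rw [hσ]; exact hnn _
  have step1 : ∀ j, lam j * c j ≤ max (lam j - t) 0 + t * c j := by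
    intro j
    have : lam j * c j = (lam j - t) * c j + t * c j := by ring
    rw [this]
    gcongr
    rcases le_or_gt t (lam j) with h | h
    · calc (lam j - t) * c j ≤ (lam j - t) * 1 := by
            apply mul_le_mul_of_nonneg_left (hc1 j) (by linarith)
        _ ≤ max (lam j - t) 0 := by rw [mul_one]; exact le_max_left _ _
    · calc (lam j - t) * c j ≤ 0 := mul_nonpos_of_nonpos_of_nonneg (by linarith) (hc0 j)
        _ ≤ max (lam j - t) 0 := le_max_right _ _
  have hmaxperm : ∑ j, max (lam j - t) 0 = ∑ j, max (lamD j - t) 0 := by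
    rw [hσ]
    exact (Equiv.sum_comp σ (fun x => max (lam x - t) 0)).symm
  have hfilter : ∑ j, max (lamD j - t) 0 =
      ∑ j ∈ Finset.univ.filter (fun j : Fin n => (j : ℕ) < k), (lamD j - t) := by
    rw [← Finset.sum_filter_add_sum_filter_not Finset.univ (fun j : Fin n => (j : ℕ) < k)
      (fun j => max (lamD j - t) 0)]
    have h1 : ∑ j ∈ Finset.univ.filter (fun j : Fin n => (j : ℕ) < k), max (lamD j - t) 0 =
        ∑ j ∈ Finset.univ.filter (fun j : Fin n => (j : ℕ) < k), (lamD j - t) := by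
      apply Finset.sum_congr rfl
      intro j hj
      have hjk : (j : ℕ) < k := (Finset.mem_filter.mp hj).2
      have : t ≤ lamD j := hanti (by simp [Fin.le_def]; omega)
      rw [max_eq_left (by linarith)]
    have h2 : ∑ j ∈ Finset.univ.filter (fun j : Fin n => ¬ (j : ℕ) < k), max (lamD j - t) 0 = 0 := by
      apply Finset.sum_eq_zero
      intro j hj
      have hjk : ¬ (j : ℕ) < k := (Finset.mem_filter.mp hj).2
      have : lamD j ≤ t := hanti (by simp [Fin.le_def]; omega)
      rw [max_eq_right (by linarith)]
    rw [h1, h2, add_zero]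
  calc ∑ j, lam j * c j ≤ ∑ j, (max (lam j - t) 0 + t * c j) := Finset.sum_le_sum fun j _ => step1 j
    _ = ∑ j, max (lam j - t) 0 + t * ∑ j, c j := by rw [Finset.sum_add_distrib, Finset.mul_sum]
    _ ≤ ∑ j, max (lam j - t) 0 + t * k := by gcongr
    _ = ∑ j ∈ Finset.univ.filter (fun j : Fin n => (j : ℕ) < k), (lamD j - t) + t * k := by
        rw [hmaxperm, hfilter]
    _ = ∑ j ∈ Finset.univ.filter (fun j : Fin n => (j : ℕ) < k), lamD j
          - (Finset.univ.filter (fun j : Fin n => (j : ℕ) < k)).card * t + t * k := by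
        rw [Finset.sum_sub_distrib, Finset.sum_const, nsmul_eq_mul]
    _ = ∑ j ∈ Finset.univ.filter (fun j : Fin n => (j : ℕ) < k), lamD j := by
        rw [card_filter_lt_fin hkn]; ring

lemma evD_eq_zero_of_rank (A : Matrix (Fin m) (Fin n) ℝ) (hr : A.rank ≤ k)
    (i : Fin n) (hik : k ≤ (i : ℕ)) : evD A i = 0 := by
  by_contra hne
  -- number of nonzero eigenvalues = rank
  have hrank : (Aᴴ * A).rank = Fintype.card
      {j // (Matrix.isHermitian_transpose_mul_self A).eigenvalues j ≠ 0} :=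
    (Matrix.isHermitian_transpose_mul_self A).rank_eq_card_non_zero_eigs
  have hAHA : (Aᴴ * A).rank = A.rank := by
    have := Matrix.rank_transpose_mul_self A
    rwa [show Aᵀ = Aᴴ from (Matrix.conjTranspose_eq_transpose_of_trivial A).symm] at this
  -- transfer count to evD via the permutation
  set σ : Equiv.Perm (Fin n) :=
    Fin.revPerm.trans (Tuple.sort (Matrix.isHermitian_transpose_mul_self A).eigenvalues) with hσdef
  have hcard : Fintype.card {j // evD A j ≠ 0} = Fintype.card
      {j // (Matrix.isHermitian_transpose_mul_self A).eigenvalues j ≠ 0} := by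
    apply Fintype.card_congr
    exact (σ.subtypeEquiv (fun j => by rw [evD_eq_comp]; exact Iff.rfl))
  have hle : Fintype.card {j // evD A j ≠ 0} ≤ k := by
    rw [hcard, ← hrank, hAHA]; exact hr
  -- but all indices ≤ i give nonzero evD
  have hsub : Finset.Iic i ⊆ Finset.univ.filter (fun j => evD A j ≠ 0) := by
    intro j hj
    rw [Finset.mem_Iic] at hj
    have : evD A i ≤ evD A j := evD_antitone A hj
    have hi0 : 0 < evD A i := lt_of_le_of_ne (evD_nonneg A i) (Ne.symm hne)
    simp only [Finset.mem_filter, Finset.mem_univ, true_and]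
    intro h0; rw [h0] at this; linarith
  have hcard2 : (Finset.Iic i).card ≤ Fintype.card {j // evD A j ≠ 0} := by
    rw [Fintype.card_subtype]
    exact Finset.card_le_card hsub
  rw [Fin.card_Iic] at hcard2
  omega

lemma kyFan2_eq_frobNorm_of_rank (A : Matrix (Fin m) (Fin n) ℝ) (hr : A.rank ≤ k) :
    kyFan2 k A = frobNorm A := by
  have hsq : kyFan2 k A ^ 2 = frobNorm A ^ 2 := by
    rw [kyFan2_sq, frobNorm_sq, ← sum_evD]
    apply Finset.sum_subset (Finset.filter_subset _ _)
    intro i _ hi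
    simp only [Finset.mem_filter, Finset.mem_univ, true_and, not_lt] at hi
    exact evD_eq_zero_of_rank A hr i hi
  have h1 := kyFan2_nonneg (k := k) A
  have h2 := frobNorm_nonneg A
  nlinarith

lemma mulVec_sq (A : Matrix (Fin m) (Fin n) ℝ) (w : Fin n → ℝ) :
    ∑ a, (A.mulVec w a) ^ 2 = ∑ j, w j * ((Aᴴ * A).mulVec w j) := by
  have h1 : ∀ j, ((Aᴴ * A).mulVec w) j = ∑ a, A a j * (A.mulVec w) a := by
    intro j
    simp only [Matrix.mulVec, dotProduct, Matrix.mul_apply, Matrix.conjTranspose_apply,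
      star_trivial, Finset.sum_mul, Finset.mul_sum]
    rw [Finset.sum_comm]
    exact Finset.sum_congr rfl fun a _ => Finset.sum_congr rfl fun l _ => by ring
  simp only [h1, Finset.mul_sum]
  rw [Finset.sum_comm]
  apply Finset.sum_congr rfl
  intro a _
  rw [sq]
  have : ∑ x : Fin n, w x * (A a x * (A *ᵥ w) a) = (∑ x : Fin n, A a x * w x) * (A *ᵥ w) a := by
    rw [Finset.sum_mul]
    exact Finset.sum_congr rfl fun x _ => by ring
  rw [this]
  rfl

lemma qform_eigen {N : ℕ} (M : Matrix (Fin N) (Fin N) ℝ) (hM : M.IsHermitian) (w : Fin N → ℝ) :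
    ∑ j, w j * (M.mulVec w j) =
      ∑ j, hM.eigenvalues j * (∑ l, (hM.eigenvectorBasis j) l * w l) ^ 2 := by
  have key := (hM.eigenvectorBasis).sum_inner_mul_inner
    ((WithLp.equiv 2 (Fin N → ℝ)).symm (M.mulVec w)) ((WithLp.equiv 2 (Fin N → ℝ)).symm w)
  simp only [PiLp.inner_apply, RCLike.inner_apply, conj_trivial,
    WithLp.equiv_symm_apply, PiLp.toLp_apply] at key
  rw [← key]
  apply Finset.sum_congr rfl
  intro j _
  have hbM : ∑ l, (hM.eigenvectorBasis j) l * (M.mulVec w) l =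
      hM.eigenvalues j * ∑ l, (hM.eigenvectorBasis j) l * w l := by
    have hsym : ∑ l, (hM.eigenvectorBasis j) l * (M.mulVec w) l =
        ∑ l, (M.mulVec (hM.eigenvectorBasis j)) l * w l := by
      simp only [Matrix.mulVec, dotProduct, Finset.mul_sum, Finset.sum_mul]
      rw [Finset.sum_comm]
      refine Finset.sum_congr rfl fun l _ => Finset.sum_congr rfl fun o _ => ?_
      have hMol : M o l = M l o := by
        have := congrFun (congrFun hM l) o
        simpa [Matrix.conjTranspose_apply] using this
      rw [← hMol]; ring
    rw [hsym]
    rw [Finset.mul_sum]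
    refine Finset.sum_congr rfl fun l _ => ?_
    have hev : (M.mulVec (hM.eigenvectorBasis j)) l =
        hM.eigenvalues j * (hM.eigenvectorBasis j) l := by
      have h2 := congrFun (hM.mulVec_eigenvectorBasis j) l
      simpa using h2
    rw [hev]; ring
  rw [hbM]
  have : ∑ l, w l * (hM.eigenvectorBasis j) l = ∑ l, (hM.eigenvectorBasis j) l * w l :=
    Finset.sum_congr rfl fun l _ => mul_comm _ _
  rw [this]; ring

lemma span_inner_expand {N r : ℕ} (V : Submodule ℝ (EuclideanSpace ℝ (Fin N)))
    (b : OrthonormalBasis (Fin r) ℝ V) (x : V) (y : EuclideanSpace ℝ (Fin N)) :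
    (inner ℝ ((x : EuclideanSpace ℝ (Fin N))) y : ℝ) =
      ∑ i, (inner ℝ ((b i : EuclideanSpace ℝ (Fin N))) (x : EuclideanSpace ℝ (Fin N)) : ℝ) *
        inner ℝ ((b i : EuclideanSpace ℝ (Fin N))) y := by
  have hx := b.sum_repr' x
  have hxE : (x : EuclideanSpace ℝ (Fin N)) =
      ∑ i, (inner ℝ ((b i : EuclideanSpace ℝ (Fin N))) (x : EuclideanSpace ℝ (Fin N)) : ℝ) •
        (b i : EuclideanSpace ℝ (Fin N)) := by
    conv_lhs => rw [← hx]
    rw [Submodule.coe_sum]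
    refine Finset.sum_congr rfl fun i _ => ?_
    rw [Submodule.coe_smul]
    congr 1
  conv_lhs => rw [hxE]
  rw [sum_inner]
  exact Finset.sum_congr rfl fun i _ => real_inner_smul_left _ _ _

lemma frobInner_le_of_rank (hk1 : 1 ≤ k) (hkn : k ≤ n)
    (X Z : Matrix (Fin m) (Fin n) ℝ) (hr : X.rank ≤ k) (hZ : kyFan2 k Z ≤ 1) :
    frobInner X Z ≤ frobNorm X := by
  classical
  set cE := (WithLp.equiv 2 (Fin n → ℝ)).symm with hcE
  set V : Submodule ℝ (EuclideanSpace ℝ (Fin n)) :=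
    Submodule.span ℝ (Set.range (fun a : Fin m => cE (X a))) with hV
  set r := Module.finrank ℝ V with hrdef
  have hrank : r = X.rank := by
    have h1 : X.rank = Module.finrank ℝ (Submodule.span ℝ (Set.range X)) := by
      rw [← Matrix.rank_transpose, Matrix.rank_eq_finrank_span_cols]; rfl
    have h2 : V = Submodule.map ((WithLp.linearEquiv 2 ℝ (Fin n → ℝ)).symm :
        (Fin n → ℝ) →ₗ[ℝ] _) (Submodule.span ℝ (Set.range X)) := by
      rw [hV, Submodule.map_span]
      congr 1
      refine Eq.trans ?_ (Set.range_comp' _ X)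
      rfl
    rw [hrdef, h2, LinearEquiv.finrank_map_eq, h1]
  have hrk : r ≤ k := hrank ▸ hr
  set b := stdOrthonormalBasis ℝ V with hb
  set u : Fin r → EuclideanSpace ℝ (Fin n) := fun i => (b i : EuclideanSpace ℝ (Fin n)) with hu
  have huon : Orthonormal ℝ u := by
    rw [orthonormal_iff_ite]
    intro i j
    have := (orthonormal_iff_ite (𝕜 := ℝ)).mp b.orthonormal i j
    rwa [Submodule.coe_inner] at this
  -- row vectors
  set xe : Fin m → EuclideanSpace ℝ (Fin n) := fun a => cE (X a) with hxe
  set ze : Fin m → EuclideanSpace ℝ (Fin n) := fun a => cE (Z a) with hze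
  have hxV : ∀ a, xe a ∈ V := fun a => Submodule.subset_span ⟨a, rfl⟩
  set α : Fin m × Fin r → ℝ := fun p => (inner ℝ (u p.2) (xe p.1) : ℝ) with hα
  set β : Fin m × Fin r → ℝ := fun p => (inner ℝ (u p.2) (ze p.1) : ℝ) with hβ
  -- step 1: frobInner X Z = ∑ p, α p * β p
  have step1 : frobInner X Z = ∑ p : Fin m × Fin r, α p * β p := by
    rw [Fintype.sum_prod_type]
    rw [frobInner]
    refine Finset.sum_congr rfl fun a _ => ?_
    have hexp := span_inner_expand V b ⟨xe a, hxV a⟩ (ze a)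
    have hinner : (inner ℝ (xe a) (ze a) : ℝ) = ∑ j, X a j * Z a j := by
      simp [hxe, hze, hcE, PiLp.inner_apply, RCLike.inner_apply, conj_trivial,
        WithLp.equiv_symm_apply, PiLp.toLp_apply]
      exact Finset.sum_congr rfl fun j _ => mul_comm _ _
    rw [← hinner]
    exact hexp
  -- step 2: sum of alpha squares
  have step2 : ∑ p : Fin m × Fin r, α p ^ 2 = frobNorm X ^ 2 := by
    rw [Fintype.sum_prod_type, frobNorm_sq]
    refine Finset.sum_congr rfl fun a _ => ?_
    have hexp := span_inner_expand V b ⟨xe a, hxV a⟩ (xe a)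
    have hinner : (inner ℝ (xe a) (xe a) : ℝ) = ∑ j, (X a j) ^ 2 := by
      simp [hxe, hcE, PiLp.inner_apply, RCLike.inner_apply, conj_trivial,
        WithLp.equiv_symm_apply, PiLp.toLp_apply, sq]
      rw [← real_inner_self_eq_norm_mul_norm]
      simp only [PiLp.inner_apply, RCLike.inner_apply, conj_trivial, PiLp.toLp_apply]
    rw [← hinner, hexp]
    refine Finset.sum_congr rfl fun i _ => ?_
    exact (pow_two (α (a, i))).trans rfl
  -- step 3: sum of beta squares is at most 1
  have step3 : ∑ p : Fin m × Fin r, β p ^ 2 ≤ 1 := by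
    set hZM := Matrix.isHermitian_transpose_mul_self Z with hZMdef
    set c : Fin n → ℝ := fun j => ∑ i, (inner ℝ (hZM.eigenvectorBasis j) (u i) : ℝ) ^ 2 with hc
    have hswap : ∑ p : Fin m × Fin r, β p ^ 2 = ∑ j, hZM.eigenvalues j * c j := by
      rw [Fintype.sum_prod_type, Finset.sum_comm]
      have hcol : ∀ i : Fin r, ∑ a, β (a, i) ^ 2 =
          ∑ j, hZM.eigenvalues j * (inner ℝ (hZM.eigenvectorBasis j) (u i) : ℝ) ^ 2 := by
        intro i
        have hZa : ∀ a, β (a, i) = Z.mulVec (u i) a := by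
          intro a
          simp only [hβ, hze, hcE, PiLp.inner_apply, RCLike.inner_apply, conj_trivial,
            WithLp.equiv_symm_apply, PiLp.toLp_apply, Matrix.mulVec, dotProduct]
        calc ∑ a, β (a, i) ^ 2 = ∑ a, (Z.mulVec (u i) a) ^ 2 :=
              Finset.sum_congr rfl fun a _ => by rw [hZa a]
          _ = ∑ j, (u i) j * ((Zᴴ * Z).mulVec (u i) j) := mulVec_sq Z (u i)
          _ = ∑ j, hZM.eigenvalues j * (∑ l, (hZM.eigenvectorBasis j) l * (u i) l) ^ 2 :=
              qform_eigen (Zᴴ * Z) hZM (u i)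
          _ = ∑ j, hZM.eigenvalues j * (inner ℝ (hZM.eigenvectorBasis j) (u i) : ℝ) ^ 2 := by
              refine Finset.sum_congr rfl fun j _ => ?_
              have hinn : (inner ℝ (hZM.eigenvectorBasis j) (u i) : ℝ) =
                  ∑ l, (hZM.eigenvectorBasis j) l * (u i) l := by
                simp [PiLp.inner_apply, RCLike.inner_apply, conj_trivial]
                exact Finset.sum_congr rfl fun _ _ => mul_comm _ _
              rw [hinn]
      rw [Finset.sum_congr rfl fun i _ => hcol i, Finset.sum_comm, hc]
      simp [Finset.mul_sum]
    rw [hswap]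
    have hc1 : ∀ j, c j ≤ 1 := by
      intro j
      have hbj : ‖(hZM.eigenvectorBasis j : EuclideanSpace ℝ (Fin n))‖ = 1 :=
        hZM.eigenvectorBasis.orthonormal.1 j
      have h := huon.sum_inner_products_le (𝕜 := ℝ) (s := Finset.univ)
        (hZM.eigenvectorBasis j)
      rw [hbj] at h
      simp only [Real.norm_eq_abs, sq_abs, one_pow] at h
      calc c j = ∑ i, (inner ℝ (u i) (hZM.eigenvectorBasis j) : ℝ) ^ 2 := by
            rw [hc]
            exact Finset.sum_congr rfl fun i _ => by rw [real_inner_comm]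
        _ ≤ 1 := h
    have hc0 : ∀ j, 0 ≤ c j := fun j => Finset.sum_nonneg fun i _ => sq_nonneg _
    have hcsum : ∑ j, c j ≤ (k : ℝ) := by
      have hpar : ∀ i : Fin r, ∑ j, (inner ℝ (hZM.eigenvectorBasis j) (u i) : ℝ) ^ 2 = 1 := by
        intro i
        have h := hZM.eigenvectorBasis.sum_inner_mul_inner (u i) (u i)
        have hxx : (inner ℝ (u i) (u i) : ℝ) = 1 := by
          rw [real_inner_self_eq_norm_sq, huon.1 i]; norm_num
        rw [hxx] at h
        rw [← h]
        refine Finset.sum_congr rfl fun j _ => ?_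
        rw [real_inner_comm (u i) (hZM.eigenvectorBasis j), sq]
      rw [hc, Finset.sum_comm]
      rw [Finset.sum_congr rfl fun i _ => hpar i]
      simp only [Finset.sum_const, Finset.card_univ, Fintype.card_fin, nsmul_eq_mul, mul_one]
      exact_mod_cast hrk
    have hkf := kyfan_principle hk1 hkn hZM.eigenvalues (evD Z) (ev_nonneg Z)
      (Fin.revPerm.trans (Tuple.sort hZM.eigenvalues)) (evD_eq_comp Z) (evD_antitone Z)
      c hc0 hc1 hcsum
    calc ∑ j, hZM.eigenvalues j * c j
        ≤ ∑ j ∈ Finset.univ.filter (fun j : Fin n => (j : ℕ) < k), evD Z j := hkf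
      _ = kyFan2 k Z ^ 2 := (kyFan2_sq Z).symm
      _ ≤ 1 := by nlinarith [kyFan2_nonneg (k := k) Z]
  -- step 4: Cauchy-Schwarz and conclude
  have hcs := Finset.sum_mul_sq_le_sq_mul_sq Finset.univ α β
  have hα2 : (0:ℝ) ≤ ∑ p : Fin m × Fin r, α p ^ 2 := Finset.sum_nonneg fun p _ => sq_nonneg _
  rw [step1]
  nlinarith [frobNorm_nonneg X, hcs, step2, step3, hα2]


lemma frobInner_le (A B : Matrix (Fin m) (Fin n) ℝ) :
    frobInner A B ≤ frobNorm A * frobNorm B := by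
  have h1 : frobInner A B = ∑ p : Fin m × Fin n, A p.1 p.2 * B p.1 p.2 :=
    (Fintype.sum_prod_type (f := fun p : Fin m × Fin n => A p.1 p.2 * B p.1 p.2)).symm
  have h2 : frobNorm A ^ 2 = ∑ p : Fin m × Fin n, (A p.1 p.2) ^ 2 := by
    rw [frobNorm_sq]
    exact (Fintype.sum_prod_type (f := fun p : Fin m × Fin n => (A p.1 p.2) ^ 2)).symm
  have h3 : frobNorm B ^ 2 = ∑ p : Fin m × Fin n, (B p.1 p.2) ^ 2 := by
    rw [frobNorm_sq]
    exact (Fintype.sum_prod_type (f := fun p : Fin m × Fin n => (B p.1 p.2) ^ 2)).symm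
  have hcs := Finset.sum_mul_sq_le_sq_mul_sq Finset.univ
    (fun p : Fin m × Fin n => A p.1 p.2) (fun p : Fin m × Fin n => B p.1 p.2)
  rw [h1]
  nlinarith [frobNorm_nonneg A, frobNorm_nonneg B, hcs, h2, h3,
    mul_nonneg (frobNorm_nonneg A) (frobNorm_nonneg B)]

lemma frobNorm_le_sqrt_of_kyFan2_le_one (hk1 : 1 ≤ k) (hkn : k ≤ n)
    (A : Matrix (Fin m) (Fin n) ℝ) (hA : kyFan2 k A ≤ 1) :
    frobNorm A ≤ Real.sqrt n := by
  have hn0 : 0 < n := lt_of_lt_of_le hk1 hkn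
  have h0mem : (⟨0, hn0⟩ : Fin n) ∈ Finset.univ.filter (fun j : Fin n => (j : ℕ) < k) := by
    simp; omega
  have hev1 : ∀ i, evD A i ≤ 1 := by
    intro i
    have h1 : evD A i ≤ evD A ⟨0, hn0⟩ := evD_antitone A (by simp [Fin.le_def])
    have h2 : evD A ⟨0, hn0⟩ ≤ ∑ j ∈ Finset.univ.filter (fun j : Fin n => (j : ℕ) < k), evD A j :=
      Finset.single_le_sum (fun j _ => evD_nonneg A j) h0mem
    have h3 : ∑ j ∈ Finset.univ.filter (fun j : Fin n => (j : ℕ) < k), evD A j = kyFan2 k A ^ 2 :=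
      (kyFan2_sq A).symm
    nlinarith [kyFan2_nonneg (k := k) A]
  have hfz : frobNorm A ^ 2 ≤ (n : ℝ) := by
    rw [frobNorm_sq, ← sum_evD]
    calc ∑ i, evD A i ≤ ∑ _i : Fin n, (1 : ℝ) := Finset.sum_le_sum fun i _ => hev1 i
      _ = n := by simp
  have := Real.sq_sqrt (show (0:ℝ) ≤ n by positivity)
  nlinarith [frobNorm_nonneg A, Real.sqrt_nonneg (n : ℝ)]

lemma bddAbove_dual (hk1 : 1 ≤ k) (hkn : k ≤ n) (A : Matrix (Fin m) (Fin n) ℝ) :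
    BddAbove {c : ℝ | ∃ Zm : Matrix (Fin m) (Fin n) ℝ, kyFan2 k Zm ≤ 1 ∧ c = frobInner A Zm} := by
  refine ⟨frobNorm A * Real.sqrt n, ?_⟩
  rintro c ⟨Zm, hZ, rfl⟩
  calc frobInner A Zm ≤ frobNorm A * frobNorm Zm := frobInner_le A Zm
    _ ≤ frobNorm A * Real.sqrt n :=
      mul_le_mul_of_nonneg_left (frobNorm_le_sqrt_of_kyFan2_le_one hk1 hkn Zm hZ)
        (frobNorm_nonneg A)

lemma frobNorm_zero_iff (A : Matrix (Fin m) (Fin n) ℝ) : frobNorm A = 0 ↔ A = 0 := by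
  constructor
  · intro h
    have hs : ∑ i, ∑ j, (A i j) ^ 2 = 0 := by
      have := frobNorm_sq A
      rw [h] at this; simpa using this.symm
    ext i j
    have h1 : ∀ i ∈ Finset.univ, ∑ j, (A i j : ℝ) ^ 2 = 0 := by
      intro i _
      have := (Finset.sum_eq_zero_iff_of_nonneg (fun i _ =>
        Finset.sum_nonneg fun j _ => sq_nonneg (A i j))).mp hs
      exact this i (Finset.mem_univ i)
    have h2 := (Finset.sum_eq_zero_iff_of_nonneg (fun j _ => sq_nonneg (A i j))).mp
      (h1 i (Finset.mem_univ i)) j (Finset.mem_univ j)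
    simpa using pow_eq_zero_iff (n := 2) (by norm_num) |>.mp h2
  · intro h; rw [h, frobNorm]; simp

lemma frobNorm_smul (c : ℝ) (A : Matrix (Fin m) (Fin n) ℝ) :
    frobNorm (c • A) = |c| * frobNorm A := by
  rw [frobNorm, frobNorm]
  have : ∑ i, ∑ j, ((c • A) i j) ^ 2 = c ^ 2 * ∑ i, ∑ j, (A i j) ^ 2 := by
    simp [Matrix.smul_apply, mul_pow, Finset.mul_sum]
  rw [this, Real.sqrt_mul (sq_nonneg c), Real.sqrt_sq_eq_abs]

lemma frobInner_self (A : Matrix (Fin m) (Fin n) ℝ) : frobInner A A = frobNorm A ^ 2 := by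
  rw [frobNorm_sq, frobInner]
  exact Finset.sum_congr rfl fun i _ => Finset.sum_congr rfl fun j _ => (sq _).symm

lemma frobInner_add_left (A B C : Matrix (Fin m) (Fin n) ℝ) :
    frobInner (A + B) C = frobInner A C + frobInner B C := by
  simp [frobInner, Matrix.add_apply, add_mul, Finset.sum_add_distrib]

lemma frobInner_comm (A B : Matrix (Fin m) (Fin n) ℝ) : frobInner A B = frobInner B A := by
  simp [frobInner, mul_comm]

lemma frobInner_smul_left (c : ℝ) (A B : Matrix (Fin m) (Fin n) ℝ) :
    frobInner (c • A) B = c * frobInner A B := by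
  simp [frobInner, Matrix.smul_apply, Finset.mul_sum, mul_assoc]

end kyfanHelpers

/-- for `X ≠ 0` of rank ≤ k, `X / ‖X‖_{k,2}` is a subgradient of
the dual Ky Fan 2-k-norm at `X`. -/
theorem subgradient_of_dual_norm {m n k : ℕ} (hk1 : 1 ≤ k) (hk : k ≤ min m n)
    (X : Matrix (Fin m) (Fin n) ℝ) (hX : X ≠ 0) (hr : X.rank ≤ k) :
    ∀ Y : Matrix (Fin m) (Fin n) ℝ,
      kyFan2Dual k (X + Y) - kyFan2Dual k X ≥ frobInner ((kyFan2 k X)⁻¹ • X) Y := by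
  intro Y
  have hkn : k ≤ n := le_trans hk (min_le_right _ _)
  have hN : kyFan2 k X = frobNorm X := kyFan2_eq_frobNorm_of_rank X hr
  have hF0 : 0 < frobNorm X := by
    rcases lt_or_eq_of_le (frobNorm_nonneg X) with h | h
    · exact h
    · exact absurd ((frobNorm_zero_iff X).mp h.symm) hX
  set W : Matrix (Fin m) (Fin n) ℝ := (kyFan2 k X)⁻¹ • X with hW
  have hWfeas : kyFan2 k W ≤ 1 := by
    calc kyFan2 k W ≤ frobNorm W := kyFan2_le_frobNorm W
      _ = |(kyFan2 k X)⁻¹| * frobNorm X := frobNorm_smul _ X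
      _ = 1 := by
          rw [hN, abs_of_nonneg (by positivity)]
          field_simp
  have h1 : frobInner (X + Y) W ≤ kyFan2Dual k (X + Y) := by
    rw [kyFan2Dual]
    apply le_csSup (bddAbove_dual hk1 hkn (X + Y))
    exact ⟨W, hWfeas, rfl⟩
  have h2 : kyFan2Dual k X ≤ frobNorm X := by
    rw [kyFan2Dual]
    apply csSup_le
    · refine ⟨frobInner X 0, 0, ?_, rfl⟩
      calc kyFan2 k (0 : Matrix (Fin m) (Fin n) ℝ)
          ≤ frobNorm (0 : Matrix (Fin m) (Fin n) ℝ) := kyFan2_le_frobNorm _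
        _ ≤ 1 := by rw [frobNorm]; simp
    · rintro c ⟨Zm, hZ, rfl⟩
      exact frobInner_le_of_rank hk1 hkn X Zm hr hZ
  have hexp : frobInner (X + Y) W = frobNorm X + frobInner W Y := by
    rw [frobInner_add_left]
    congr 1
    · rw [frobInner_comm, hW, frobInner_smul_left, frobInner_self, hN]
      field_simp
    · rw [frobInner_comm]
  have h3 : frobNorm X + frobInner W Y ≤ kyFan2Dual k (X + Y) := hexp ▸ h1
  have h4 : frobInner ((kyFan2 k X)⁻¹ • X) Y = frobInner W Y := rfl
  rw [ge_iff_le, h4]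
  linarith
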